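/- Let −1 ≤ α ≤ β ≤ 1, let φ be the indicator function of [α,β], and define b_0 = (arccos α − arccos β)/π and b_i = 2(sin(i·arccos α) − sin(i·arccos β))/(iπ) for i ≥ 1. Let p_m(z) = Σ_{i=0}^{m} b_i T_i(z) be the truncated Chebyshev series. Then p_m converges to φ in L²(μ): ∫_{(−1,1)} (p_m(z) − φ(z))² (1−z²)^{−1/2} dz → 0 as m → ∞. -/

import Mathlib

open MeasureTheory Real Polynomial Polynomial.Chebyshev Filter

open Set AddCircle intervalIntegral

set_option maxHeartbeats 1000000

section ChebyshevL2Aux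

instance fact_two_pi_pos : Fact (0 < 2 * Real.pi) := ⟨by positivity⟩

/-- The ideal filter composed with cosine. -/
noncomputable def idealF (α β : ℝ) : ℝ → ℝ :=
  fun t => Set.indicator (Set.Icc α β) (fun _ => (1:ℝ)) (Real.cos t)

lemma idealF_nonneg (α β t : ℝ) : 0 ≤ idealF α β t :=
  Set.indicator_nonneg (fun _ _ => zero_le_one) _

lemma idealF_le_one (α β t : ℝ) : idealF α β t ≤ 1 := by
  unfold idealF
  classical
  rw [Set.indicator_apply]
  split <;> norm_num

lemma idealF_periodic (α β : ℝ) :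
    Function.Periodic (fun t => ((idealF α β t : ℝ) : ℂ)) (2*π) := by
  intro t; simp [idealF, Real.cos_add_two_pi]

/-- The ideal filter as a function on the circle. -/
noncomputable def idealG (α β : ℝ) : AddCircle (2*π) → ℂ := (idealF_periodic α β).lift

lemma idealG_coe (α β t : ℝ) : idealG α β (↑t) = ((idealF α β t : ℝ) : ℂ) :=
  (idealF_periodic α β).lift_coe t

lemma measurable_idealF (α β : ℝ) : Measurable (idealF α β) :=
  (measurable_const.indicator measurableSet_Icc).comp Real.measurable_cos

lemma measurable_idealG (α β : ℝ) : Measurable (idealG α β) := by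
  have h : idealG α β = fun x =>
      ((idealF α β ((measurableEquivIoc (2*π) 0 x : Ioc (0:ℝ) (0 + 2*π)) : ℝ) : ℝ) : ℂ) := by
    funext x
    conv_lhs => rw [← (equivIoc (2*π) 0).symm_apply_apply x]
    exact idealG_coe α β _
  rw [h]
  exact (Complex.measurable_ofReal.comp ((measurable_idealF α β).comp
    (measurable_subtype_coe.comp (measurableEquivIoc (2*π) 0).measurable)))

lemma memLp_idealG (α β : ℝ) : MemLp (idealG α β) 2 (haarAddCircle (T := 2*π)) := by
  refine MemLp.of_bound (measurable_idealG α β).aestronglyMeasurable 1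
    (Filter.Eventually.of_forall fun x => ?_)
  induction x using QuotientAddGroup.induction_on with
  | H t =>
    rw [show ((t : AddCircle (2*π))) = (t : ℝ) from rfl, idealG_coe]
    rw [Complex.norm_real, Real.norm_eq_abs, abs_le]
    exact ⟨by linarith [idealF_nonneg α β t], idealF_le_one α β t⟩

lemma cos_mem_Icc_iff {α β : ℝ} (h1 : -1 ≤ α) (h2 : α ≤ β) (h3 : β ≤ 1)
    {θ : ℝ} (h0 : 0 ≤ θ) (hπ : θ ≤ π) :
    Real.cos θ ∈ Set.Icc α β ↔ θ ∈ Set.Icc (Real.arccos β) (Real.arccos α) := by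
  have hα1 : α ≤ 1 := h2.trans h3
  have hβ1 : -1 ≤ β := h1.trans h2
  constructor
  · rintro ⟨hl, hr⟩
    constructor
    · by_contra hc
      push_neg at hc
      have := Real.strictAntiOn_cos ⟨h0, hπ⟩ ⟨Real.arccos_nonneg β, Real.arccos_le_pi β⟩ hc
      rw [Real.cos_arccos hβ1 h3] at this
      linarith
    · by_contra hc
      push_neg at hc
      have := Real.strictAntiOn_cos ⟨Real.arccos_nonneg α, Real.arccos_le_pi α⟩ ⟨h0, hπ⟩ hc
      rw [Real.cos_arccos h1 hα1] at this
      linarith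
  · rintro ⟨hl, hr⟩
    constructor
    · have := Real.cos_le_cos_of_nonneg_of_le_pi h0 (Real.arccos_le_pi α) hr
      rwa [Real.cos_arccos h1 hα1] at this
    · have := Real.cos_le_cos_of_nonneg_of_le_pi (Real.arccos_nonneg β) hπ hl
      rwa [Real.cos_arccos hβ1 h3] at this

lemma abs_mem_union_iff {A B x : ℝ} (hA : 0 ≤ A) :
    x ∈ Set.Icc (-B) (-A) ∪ Set.Icc A B ↔ |x| ∈ Set.Icc A B := by
  rcases le_or_gt 0 x with hx | hx
  · rw [abs_of_nonneg hx]
    simp only [Set.mem_union, Set.mem_Icc]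
    constructor
    · rintro (⟨hl, hr⟩ | h); · constructor <;> linarith
      · exact h
    · exact fun h => Or.inr h
  · rw [abs_of_neg hx]
    simp only [Set.mem_union, Set.mem_Icc]
    constructor
    · rintro (⟨hl, hr⟩ | ⟨hl, hr⟩) <;> constructor <;> linarith
    · rintro ⟨hl, hr⟩; left; constructor <;> linarith

/-- The Fourier coefficients of the ideal filter. -/
noncomputable def cfun (α β : ℝ) : ℤ → ℝ := fun n =>
  if n = 0 then (Real.arccos α - Real.arccos β) / π
  else (Real.sin (n * Real.arccos α) - Real.sin (n * Real.arccos β)) / (n * π)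

lemma cfun_neg (α β : ℝ) (n : ℤ) : cfun α β (-n) = cfun α β n := by
  rcases eq_or_ne n 0 with rfl | hn
  · simp
  · unfold cfun
    rw [if_neg (neg_ne_zero.2 hn), if_neg hn]
    push_cast
    rw [neg_mul, neg_mul, Real.sin_neg, Real.sin_neg]
    have hnr : (n:ℝ) ≠ 0 := Int.cast_ne_zero.2 hn
    field_simp
    ring

lemma arccos_le_arccos' {α β : ℝ} (h1 : -1 ≤ α) (h2 : α ≤ β) (h3 : β ≤ 1) :
    Real.arccos β ≤ Real.arccos α := by
  by_contra hc
  push_neg at hc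
  have := Real.strictAntiOn_cos ⟨Real.arccos_nonneg α, Real.arccos_le_pi α⟩
    ⟨Real.arccos_nonneg β, Real.arccos_le_pi β⟩ hc
  rw [Real.cos_arccos h1 (h2.trans h3), Real.cos_arccos (h1.trans h2) h3] at this
  linarith

lemma fourierCoeff_idealG {α β : ℝ} (h1 : -1 ≤ α) (h2 : α ≤ β) (h3 : β ≤ 1) (n : ℤ) :
    fourierCoeff (idealG α β) n = ((cfun α β n : ℝ) : ℂ) := by
  set A := Real.arccos β with hA
  set Bg := Real.arccos α with hBg
  have hA0 : 0 ≤ A := Real.arccos_nonneg β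
  have hAB : A ≤ Bg := arccos_le_arccos' h1 h2 h3
  have hBπ : Bg ≤ π := Real.arccos_le_pi α
  have hππ : -π ≤ π := by linarith [Real.pi_pos]
  rw [fourierCoeff_eq_intervalIntegral (idealG α β) n (-π)]
  have hb : -π + 2*π = π := by ring
  rw [hb]
  set E : Set ℝ := Real.cos ⁻¹' (Set.Icc α β) with hE
  have hEmeas : MeasurableSet E := measurableSet_Icc.preimage Real.measurable_cos
  have hint : ∀ x : ℝ, (fourier (-n) (↑x : AddCircle (2*π))) • idealG α β ↑x
      = Set.indicator E (fun y : ℝ => Complex.exp ((-(n:ℂ) * Complex.I) * (y:ℂ))) x := by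
    intro x
    have hf : (fourier (-n) (↑x : AddCircle (2*π)) : ℂ)
        = Complex.exp ((-(n:ℂ) * Complex.I) * (x:ℂ)) := by
      rw [fourier_coe_apply]
      congr 1
      have hπc : (π : ℂ) ≠ 0 := Complex.ofReal_ne_zero.2 Real.pi_ne_zero
      push_cast
      field_simp
    rw [idealG_coe, smul_eq_mul, hf]
    by_cases hx : x ∈ E
    · rw [Set.indicator_of_mem hx]
      have : idealF α β x = 1 := by
        unfold idealF
        exact Set.indicator_of_mem (show Real.cos x ∈ Set.Icc α β from hx) _
      rw [this]
      simp
    · rw [Set.indicator_of_notMem hx]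
      have : idealF α β x = 0 := by
        unfold idealF
        exact Set.indicator_of_notMem (show Real.cos x ∉ Set.Icc α β from hx) _
      rw [this]
      simp
  rw [intervalIntegral.integral_congr (fun x _ => hint x)]
  rw [intervalIntegral.integral_of_le hππ,
    setIntegral_indicator hEmeas]
  have hset : E ∩ Set.Ioc (-π) π = (Set.Icc (-Bg) (-A) ∪ Set.Icc A Bg) ∩ Set.Ioc (-π) π := by
    ext x
    simp only [Set.mem_inter_iff, Set.mem_preimage, Set.mem_Ioc, hE]
    constructor
    · rintro ⟨hc, hio⟩
      refine ⟨(abs_mem_union_iff hA0).2 ?_, hio⟩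
      rw [← cos_mem_Icc_iff h1 h2 h3 (abs_nonneg x) (abs_le.2 ⟨hio.1.le, hio.2⟩)]
      · rwa [Real.cos_abs]
    · rintro ⟨hu, hio⟩
      refine ⟨?_, hio⟩
      have := (abs_mem_union_iff hA0).1 hu
      rw [← cos_mem_Icc_iff h1 h2 h3 (abs_nonneg x)
        (abs_le.2 ⟨hio.1.le, hio.2⟩)] at this
      rwa [Real.cos_abs] at this
  rw [Set.inter_comm, hset]
  have hsub : Set.Icc (-Bg) (-A) ∪ Set.Icc A Bg ⊆ Set.Icc (-π) π := by
    rintro x (⟨hl, hr⟩ | ⟨hl, hr⟩) <;> constructor <;> nlinarith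
  have hae : ((Set.Icc (-Bg) (-A) ∪ Set.Icc A Bg) ∩ Set.Ioc (-π) π : Set ℝ)
      =ᵐ[volume] ((Set.Icc (-Bg) (-A) ∪ Set.Icc A Bg : Set ℝ)) := by
    rw [MeasureTheory.ae_eq_set]
    constructor
    · rw [Set.diff_eq_empty.2 Set.inter_subset_left]; simp
    · refine measure_mono_null (fun x hx => ?_) (measure_singleton (-π))
      obtain ⟨hu, hni⟩ := hx
      have hxm := hsub hu
      have hnIoc : x ∉ Set.Ioc (-π) π := fun hc => hni ⟨hu, hc⟩
      have hxle : ¬(-π < x) := fun hc => hnIoc ⟨hc, hxm.2⟩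
      exact Set.mem_singleton_iff.2 (le_antisymm (not_lt.1 hxle) hxm.1)
  rw [setIntegral_congr_set hae]
  have hcont : Continuous (fun y : ℝ => Complex.exp ((-(n:ℂ) * Complex.I) * (y:ℂ))) :=
    Complex.continuous_exp.comp (continuous_const.mul Complex.continuous_ofReal)
  have hdisj : AEDisjoint volume (Set.Icc (-Bg) (-A)) (Set.Icc A Bg) := by
    refine measure_mono_null (fun x hx => ?_) (measure_singleton (0:ℝ))
    obtain ⟨⟨_, hr1⟩, ⟨hl2, _⟩⟩ := hx
    have : A = 0 := le_antisymm (by linarith) hA0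
    simp only [Set.mem_singleton_iff]
    linarith
  rw [MeasureTheory.integral_union_ae hdisj measurableSet_Icc.nullMeasurableSet
    (hcont.integrableOn_Icc) (hcont.integrableOn_Icc)]
  rw [MeasureTheory.integral_Icc_eq_integral_Ioc, MeasureTheory.integral_Icc_eq_integral_Ioc,
    ← intervalIntegral.integral_of_le (by linarith : -Bg ≤ -A),
    ← intervalIntegral.integral_of_le hAB]
  rcases eq_or_ne n 0 with rfl | hn
  · simp only [Int.cast_zero, neg_zero, zero_mul, Complex.exp_zero,
      intervalIntegral.integral_const]
    simp only [cfun, if_pos rfl]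
    rw [Complex.real_smul]
    push_cast
    have hπc : (π : ℂ) ≠ 0 := Complex.ofReal_ne_zero.2 Real.pi_ne_zero
    field_simp
    simp only [Complex.real_smul, hA, hBg]
    push_cast
    ring
  · rw [integral_exp_mul_complex (by simp [hn] : (-(n:ℂ) * Complex.I) ≠ 0),
      integral_exp_mul_complex (by simp [hn] : (-(n:ℂ) * Complex.I) ≠ 0)]
    simp only [cfun, if_neg hn]
    have hexp : ∀ x : ℝ, Complex.exp ((-(n:ℂ) * Complex.I) * (x:ℂ))
        = ((Real.cos ((n:ℝ)*x) : ℝ) : ℂ) - ((Real.sin ((n:ℝ)*x) : ℝ) : ℂ) * Complex.I := by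
      intro x
      rw [show ((-(n:ℂ) * Complex.I) * (x:ℂ)) = (-((n:ℝ)*x : ℝ) : ℂ) * Complex.I by
          push_cast; ring,
        Complex.exp_mul_I, Complex.cos_neg, Complex.sin_neg, Complex.ofReal_cos,
        Complex.ofReal_sin]
      push_cast
      ring
    have hn' : (n : ℂ) ≠ 0 := Int.cast_ne_zero.2 hn
    have hπ : (π : ℂ) ≠ 0 := Complex.ofReal_ne_zero.2 Real.pi_ne_zero
    rw [hexp (-A), hexp (-Bg), hexp Bg, hexp A, Complex.real_smul,
      mul_neg, mul_neg, Real.cos_neg, Real.cos_neg, Real.sin_neg, Real.sin_neg]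
    push_cast
    field_simp
    ring

lemma sum_Icc_int {M : Type*} [AddCommMonoid M] (f : ℤ → M) (m : ℕ) :
    ∑ n ∈ Finset.Icc (-(m:ℤ)) (m:ℤ), f n
      = f 0 + ∑ i ∈ Finset.range m, (f ((i:ℤ)+1) + f (-((i:ℤ)+1))) := by
  induction m with
  | zero => simp
  | succ m ih =>
    have h1 : Finset.Icc (-(↑(m+1):ℤ)) (↑(m+1):ℤ)
        = insert (-((m:ℤ)+1)) (insert ((m:ℤ)+1) (Finset.Icc (-(m:ℤ)) (m:ℤ))) := by
      ext x; simp only [Finset.mem_Icc, Finset.mem_insert]; push_cast; omega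
    rw [h1, Finset.sum_insert (by simp only [Finset.mem_Icc, Finset.mem_insert]; omega),
      Finset.sum_insert (by simp only [Finset.mem_Icc]; omega), ih, Finset.sum_range_succ]
    abel

lemma fourier_add_neg (k : ℤ) (t : ℝ) :
    (fourier k (↑t : AddCircle (2*π)) : ℂ) + fourier (-k) (↑t : AddCircle (2*π))
      = ((2 * Real.cos (k * t) : ℝ) : ℂ) := by
  have hf : ∀ j : ℤ, (fourier j (↑t : AddCircle (2*π)) : ℂ)
      = Complex.exp (((j : ℝ) * t : ℝ) * Complex.I) := by
    intro j
    rw [fourier_coe_apply]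
    congr 1
    have hπc : (π : ℂ) ≠ 0 := Complex.ofReal_ne_zero.2 Real.pi_ne_zero
    push_cast
    field_simp
  rw [hf, hf, Complex.exp_mul_I, Complex.exp_mul_I]
  push_cast
  rw [neg_mul, Complex.cos_neg, Complex.sin_neg]
  ring

lemma sum_fourier_eq {α β : ℝ} (b : ℕ → ℝ)
    (hb0 : b 0 = (Real.arccos α - Real.arccos β) / Real.pi)
    (hbi : ∀ i : ℕ, 1 ≤ i →
      b i = 2 * (Real.sin (i * Real.arccos α) - Real.sin (i * Real.arccos β)) / (i * Real.pi))
    (m : ℕ) (t : ℝ) :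
    ∑ n ∈ Finset.Icc (-(m:ℤ)) (m:ℤ),
        ((cfun α β n : ℝ) : ℂ) • fourier n (↑t : AddCircle (2*π))
      = (((∑ i ∈ Finset.range (m+1), b i * Real.cos (i * t)) : ℝ) : ℂ) := by
  rw [sum_Icc_int, Finset.sum_range_succ']
  have h0 : ((cfun α β 0 : ℝ) : ℂ) • fourier (0:ℤ) (↑t : AddCircle (2*π))
      = ((b 0 : ℝ) : ℂ) := by
    rw [fourier_zero, smul_eq_mul, mul_one, hb0]
    unfold cfun
    norm_num
  have hk : ∀ i : ℕ,
      ((cfun α β ((i:ℤ)+1) : ℝ) : ℂ) • fourier ((i:ℤ)+1) (↑t : AddCircle (2*π))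
        + ((cfun α β (-((i:ℤ)+1)) : ℝ) : ℂ) • fourier (-((i:ℤ)+1)) (↑t : AddCircle (2*π))
      = ((b (i+1) * Real.cos ((i+1 : ℕ) * t) : ℝ) : ℂ) := by
    intro i
    rw [cfun_neg, smul_eq_mul, smul_eq_mul, ← mul_add, fourier_add_neg]
    have hcf : cfun α β ((i:ℤ)+1) = b (i+1) / 2 := by
      unfold cfun
      rw [if_neg (by omega), hbi (i+1) (by omega)]
      have : (((i:ℤ)+1 : ℤ) : ℝ) = ((i+1 : ℕ) : ℝ) := by push_cast; ring
      rw [this]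
      have hne : ((i+1 : ℕ) : ℝ) ≠ 0 := by positivity
      field_simp
    rw [hcf]
    have harg : (((i:ℤ)+1 : ℤ) : ℝ) * t = ((i+1 : ℕ) : ℝ) * t := by push_cast; ring
    push_cast [harg]
    ring
  rw [h0]
  push_cast
  rw [Finset.sum_congr rfl (fun i _ => hk i)]
  push_cast
  rw [add_comm]
  congr 1
  · norm_num

lemma cos_image_Ioo : Real.cos '' Set.Ioo 0 π = Set.Ioo (-1 : ℝ) 1 := by
  ext z
  constructor
  · rintro ⟨θ, ⟨h0, hπ⟩, rfl⟩
    constructor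
    · have := Real.strictAntiOn_cos ⟨h0.le, hπ.le⟩ ⟨Real.pi_pos.le, le_refl π⟩ hπ
      rwa [Real.cos_pi] at this
    · have := Real.strictAntiOn_cos ⟨le_refl 0, Real.pi_pos.le⟩ ⟨h0.le, hπ.le⟩ h0
      rwa [Real.cos_zero] at this
  · rintro ⟨hl, hr⟩
    refine ⟨Real.arccos z, ⟨Real.arccos_pos.2 hr, ?_⟩, Real.cos_arccos hl.le hr.le⟩
    refine lt_of_le_of_ne (Real.arccos_le_pi z) fun h => ?_
    rw [Real.arccos_eq_pi] at h
    linarith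

lemma subst_integral (q : ℝ → ℝ) :
    ∫ z in Set.Ioo (-1:ℝ) 1, q z
      = ∫ θ in Set.Ioo 0 π, |(-Real.sin θ)| • q (Real.cos θ) := by
  rw [← cos_image_Ioo]
  exact integral_image_eq_integral_abs_deriv_smul measurableSet_Ioo
    (fun x _ => (Real.hasDerivAt_cos x).hasDerivWithinAt)
    (Real.injOn_cos.mono Set.Ioo_subset_Icc_self) q

lemma coeFn_lp_sum {E : Type*} [NormedAddCommGroup E] {X : Type*} [MeasurableSpace X]
    {μ : Measure X} {p : ENNReal} {ι : Type*} (s : Finset ι) (f : ι → Lp E p μ) :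
    ⇑(∑ i ∈ s, f i) =ᵐ[μ] fun x => ∑ i ∈ s, f i x := by
  classical
  induction s using Finset.induction with
  | empty => simpa [Pi.zero_def] using Lp.coeFn_zero E p μ
  | insert a s' hns ih =>
    rw [Finset.sum_insert hns]
    filter_upwards [Lp.coeFn_add (f a) (∑ i ∈ s', f i), ih] with x hx1 hx2
    simp only [Finset.sum_insert hns, hx1, Pi.add_apply, hx2]

lemma integral_norm_sq_eq {X : Type*} [MeasurableSpace X] {μ : Measure X}
    (u : Lp ℂ 2 μ) : ∫ a, ‖u a‖^2 ∂μ = ‖u‖^2 := by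
  have h2 : ∀ a : X, ‖u a‖^2 = RCLike.re (inner ℂ (u a) (u a) : ℂ) := by
    intro a; rw [inner_self_eq_norm_sq]
  calc ∫ a, ‖u a‖^2 ∂μ
      = ∫ a, RCLike.re (inner ℂ (u a) (u a) : ℂ) ∂μ := by
        simp_rw [h2]
    _ = RCLike.re (∫ a, (inner ℂ (u a) (u a) : ℂ) ∂μ) := by
        rw [integral_re (L2.integrable_inner u u)]
    _ = RCLike.re (inner ℂ u u : ℂ) := by rw [L2.inner_def]
    _ = ‖u‖^2 := inner_self_eq_norm_sq u

end ChebyshevL2Aux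

/-- The truncated Chebyshev series `p_m` of the ideal filter `φ` (the indicator
function of `[α, β]`) converges to `φ` in `L²` of the Chebyshev weight measure:
`∫_{(-1,1)} (p_m(z) - φ(z))² (1 - z²)^(-1/2) dz → 0` as `m → ∞`. -/
theorem truncated_chebyshev_series_tendsto_L2 (α β : ℝ)
    (h1 : -1 ≤ α) (h2 : α ≤ β) (h3 : β ≤ 1)
    (b : ℕ → ℝ)
    (hb0 : b 0 = (Real.arccos α - Real.arccos β) / Real.pi)
    (hbi : ∀ i : ℕ, 1 ≤ i →
      b i = 2 * (Real.sin (i * Real.arccos α) - Real.sin (i * Real.arccos β)) / (i * Real.pi)) :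
    Tendsto
      (fun m : ℕ => ∫ z in Set.Ioo (-1 : ℝ) 1,
        ((∑ i ∈ Finset.range (m + 1), b i * (Chebyshev.T ℝ i).eval z) -
            Set.indicator (Set.Icc α β) (fun _ => (1 : ℝ)) z) ^ 2 *
          (Real.sqrt (1 - z ^ 2))⁻¹)
      atTop (nhds 0) := by
  classical
  have hπ : (0:ℝ) < π := Real.pi_pos
  have hmem := memLp_idealG α β
  set fL : Lp ℂ 2 (haarAddCircle (T := 2*π)) := hmem.toLp (idealG α β) with hfLdef
  set P : ℕ → Lp ℂ 2 (haarAddCircle (T := 2*π)) := fun m =>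
    ∑ n ∈ Finset.Icc (-(m:ℤ)) (m:ℤ), ((cfun α β n : ℝ) : ℂ) • fourierLp 2 n with hPdef
  have hsum : HasSum (fun n : ℤ => ((cfun α β n : ℝ) : ℂ) • fourierLp 2 n) fL := by
    have h := hasSum_fourier_series_L2 fL
    have hcoef : ∀ n : ℤ, fourierCoeff (⇑fL) n = ((cfun α β n : ℝ) : ℂ) := by
      intro n
      rw [← fourierCoeff_idealG h1 h2 h3 n]
      apply MeasureTheory.integral_congr_ae
      filter_upwards [hmem.coeFn_toLp] with x hx
      rw [hx]
    simpa only [hcoef] using h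
  have hIcc : Tendsto (fun m : ℕ => Finset.Icc (-(m:ℤ)) (m:ℤ)) atTop atTop := by
    apply Filter.tendsto_atTop_finset_of_monotone
    · intro m k hmk
      apply Finset.Icc_subset_Icc
      · simp only [neg_le_neg_iff, Int.ofNat_le]; exact hmk
      · exact_mod_cast hmk
    · intro n
      exact ⟨n.natAbs, by simp only [Finset.mem_Icc]; omega⟩
  have hTend : Tendsto P atTop (nhds fL) := by
    have h' : Tendsto (fun s : Finset ℤ => ∑ n ∈ s, ((cfun α β n : ℝ) : ℂ) • fourierLp 2 n)
        atTop (nhds fL) := hsum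
    exact h'.comp hIcc
  have hnorm0 : Tendsto (fun m => π * ‖P m - fL‖ ^ 2) atTop (nhds 0) := by
    have h := tendsto_iff_norm_sub_tendsto_zero.1 hTend
    have h2 := (h.pow 2).const_mul π
    simpa using h2
  have key : ∀ m : ℕ, (∫ z in Set.Ioo (-1 : ℝ) 1,
        ((∑ i ∈ Finset.range (m + 1), b i * (Chebyshev.T ℝ i).eval z) -
            Set.indicator (Set.Icc α β) (fun _ => (1 : ℝ)) z) ^ 2 *
          (Real.sqrt (1 - z ^ 2))⁻¹)
      = π * ‖P m - fL‖ ^ 2 := by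
    intro m
    set Sf : ℝ → ℝ := fun t => ∑ i ∈ Finset.range (m+1), b i * Real.cos (i * t) with hSf
    set h : ℝ → ℝ := fun t => (Sf t - idealF α β t)^2 with hh
    -- Step 1: substitution z = cos θ
    have step1 : (∫ z in Set.Ioo (-1 : ℝ) 1,
        ((∑ i ∈ Finset.range (m + 1), b i * (Chebyshev.T ℝ i).eval z) -
            Set.indicator (Set.Icc α β) (fun _ => (1 : ℝ)) z) ^ 2 *
          (Real.sqrt (1 - z ^ 2))⁻¹)
        = ∫ θ in Set.Ioo 0 π, h θ := by
      rw [subst_integral]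
      apply setIntegral_congr_fun measurableSet_Ioo
      intro θ hθ
      obtain ⟨h0θ, hθπ⟩ := hθ
      have hsin : 0 < Real.sin θ := Real.sin_pos_of_pos_of_lt_pi h0θ hθπ
      have hsqrt : Real.sqrt (1 - Real.cos θ ^ 2) = Real.sin θ := by
        rw [show (1:ℝ) - Real.cos θ^2 = Real.sin θ^2 by nlinarith [Real.sin_sq_add_cos_sq θ],
          Real.sqrt_sq hsin.le]
      have hT : ∀ i : ℕ, (Chebyshev.T ℝ (i:ℤ)).eval (Real.cos θ) = Real.cos (i * θ) := by
        intro i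
        rw [Polynomial.Chebyshev.T_real_cos]
        norm_num
      simp only [smul_eq_mul, abs_neg, abs_of_pos hsin, hsqrt, hT]
      rw [hh, hSf]
      simp only [idealF]
      field_simp
      simp only [mul_comm θ]
    rw [step1]
    -- Step 2: reflection and transfer to the circle
    have hFmeas : Measurable (idealF α β) := measurable_idealF α β
    have hScont : Continuous Sf := by
      apply continuous_finset_sum
      intro i _
      exact continuous_const.mul (Real.continuous_cos.comp (continuous_const.mul continuous_id))
    have hhmeas : Measurable h := ((hScont.measurable.sub hFmeas).pow measurable_const)
    set C : ℝ := (∑ i ∈ Finset.range (m+1), |b i| + 1)^2 with hC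
    have hbd : ∀ t, ‖h t‖ ≤ C := by
      intro t
      have hS : |Sf t| ≤ ∑ i ∈ Finset.range (m+1), |b i| := by
        refine (Finset.abs_sum_le_sum_abs _ _).trans (Finset.sum_le_sum fun i _ => ?_)
        rw [abs_mul]
        exact mul_le_of_le_one_right (abs_nonneg _) (Real.abs_cos_le_one _)
      have hF : |idealF α β t| ≤ 1 := by
        rw [abs_of_nonneg (idealF_nonneg α β t)]
        exact idealF_le_one α β t
      have h1' : |Sf t - idealF α β t| ≤ ∑ i ∈ Finset.range (m+1), |b i| + 1 :=
        (abs_sub _ _).trans (add_le_add hS hF)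
      rw [hh]
      simp only [Real.norm_eq_abs, abs_pow]
      rw [hC]
      exact pow_le_pow_left₀ (abs_nonneg _) h1' 2
    have hIntIcc : IntegrableOn h (Set.Icc (-π) π) volume := by
      refine Integrable.mono' (integrableOn_const measure_Icc_lt_top.ne)
        hhmeas.aestronglyMeasurable.restrict (ae_of_all _ fun t => hbd t)
    have heven : ∀ t, h (-t) = h t := by
      intro t
      simp only [hh, hSf, idealF, mul_neg, Real.cos_neg]
    have i1 : IntervalIntegrable h volume (-π) 0 := by
      apply IntegrableOn.intervalIntegrable
      apply hIntIcc.mono_set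
      rw [Set.uIcc_of_le (by linarith)]
      exact Set.Icc_subset_Icc (le_refl _) (by linarith)
    have i2 : IntervalIntegrable h volume 0 π := by
      apply IntegrableOn.intervalIntegrable
      apply hIntIcc.mono_set
      rw [Set.uIcc_of_le (by linarith)]
      exact Set.Icc_subset_Icc (by linarith) (le_refl _)
    have e1 : ∫ θ in Set.Ioo 0 π, h θ = ∫ θ in (0:ℝ)..π, h θ := by
      rw [intervalIntegral.integral_of_le hπ.le, MeasureTheory.integral_Ioc_eq_integral_Ioo]
    have e2 : ∫ θ in (-π)..π, h θ = 2 * ∫ θ in (0:ℝ)..π, h θ := by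
      rw [← intervalIntegral.integral_add_adjacent_intervals i1 i2]
      have hrefl : ∫ θ in (-π)..(0:ℝ), h θ = ∫ θ in (0:ℝ)..π, h θ := by
        have hcn : ∫ x in (0:ℝ)..π, h (-x) = ∫ x in (-π)..(-0:ℝ), h x :=
          intervalIntegral.integral_comp_neg h
        rw [intervalIntegral.integral_congr (fun x _ => (heven x)), neg_zero] at hcn
        exact hcn.symm
      rw [hrefl]
      ring
    -- to circle
    set G : AddCircle (2*π) → ℝ := fun x =>
      ‖(∑ n ∈ Finset.Icc (-(m:ℤ)) (m:ℤ), ((cfun α β n : ℝ):ℂ) • fourier n x)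
        - idealG α β x‖^2 with hG
    have e3 : ∫ θ in (-π)..π, h θ = ∫ x : AddCircle (2*π), G x ∂volume := by
      have hpre := AddCircle.integral_preimage (2*π) (-π) G
      rw [show -π + 2*π = π by ring] at hpre
      rw [intervalIntegral.integral_of_le (by linarith : -π ≤ π), ← hpre]
      apply setIntegral_congr_fun measurableSet_Ioc
      intro t _
      rw [hG]
      simp only
      rw [sum_fourier_eq b hb0 hbi m t, idealG_coe, ← Complex.ofReal_sub,
        Complex.norm_real, Real.norm_eq_abs, sq_abs]
    have e4 : ∫ x : AddCircle (2*π), G x ∂volume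
        = (2*π) * ∫ x : AddCircle (2*π), G x ∂haarAddCircle := by
      rw [AddCircle.volume_eq_smul_haarAddCircle, MeasureTheory.integral_smul_measure _ _,
        ENNReal.toReal_ofReal (by positivity), smul_eq_mul]
    have e5 : ∫ x : AddCircle (2*π), G x ∂haarAddCircle = ‖P m - fL‖^2 := by
      rw [← integral_norm_sq_eq (P m - fL)]
      apply MeasureTheory.integral_congr_ae
      have hterm : ∀ n ∈ Finset.Icc (-(m:ℤ)) (m:ℤ),
          ⇑(((cfun α β n : ℝ):ℂ) • (fourierLp 2 n : Lp ℂ 2 (haarAddCircle (T := 2*π))))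
            =ᵐ[haarAddCircle] fun x => ((cfun α β n : ℝ):ℂ) • fourier n x := by
        intro n _
        filter_upwards [Lp.coeFn_smul (((cfun α β n : ℝ):ℂ)) (fourierLp 2 n),
          coeFn_fourierLp 2 n] with x hx1 hx2
        rw [hx1]
        simp only [Pi.smul_apply, hx2]
      have hall : ∀ᵐ x ∂(haarAddCircle (T := 2*π)),
          ∀ n ∈ (Finset.Icc (-(m:ℤ)) (m:ℤ) : Set ℤ),
          (((cfun α β n : ℝ):ℂ) • (fourierLp 2 n : Lp ℂ 2 (haarAddCircle (T := 2*π)))) x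
            = ((cfun α β n : ℝ):ℂ) • fourier n x := by
        rw [MeasureTheory.ae_ball_iff (Finset.countable_toSet _)]
        exact fun n hn => hterm n (Finset.mem_coe.1 hn)
      filter_upwards [Lp.coeFn_sub (P m) fL, coeFn_lp_sum (Finset.Icc (-(m:ℤ)) (m:ℤ))
        (fun n => ((cfun α β n : ℝ):ℂ) • fourierLp 2 n), hmem.coeFn_toLp, hall]
        with x hx1 hx2 hx3 hx4
      rw [hG]
      simp only
      rw [hx1]
      simp only [Pi.sub_apply]
      rw [hPdef]
      simp only
      rw [hx2]
      rw [Finset.sum_congr rfl (fun n hn => hx4 n (Finset.mem_coe.2 hn)), hx3]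
    have hfinal : (2:ℝ) * ∫ θ in (0:ℝ)..π, h θ = 2 * (π * ‖P m - fL‖^2) := by
      rw [← e2, e3, e4, e5]
      ring
    rw [e1]
    linarith
  have hfun : (fun m : ℕ => ∫ z in Set.Ioo (-1 : ℝ) 1,
        ((∑ i ∈ Finset.range (m + 1), b i * (Chebyshev.T ℝ i).eval z) -
            Set.indicator (Set.Icc α β) (fun _ => (1 : ℝ)) z) ^ 2 *
          (Real.sqrt (1 - z ^ 2))⁻¹)
      = fun m => π * ‖P m - fL‖ ^ 2 := funext key
  rw [hfun]
  exact hnorm0
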